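/- For any T in M_n and any column index 1 ≤ b ≤ n-2, the number of reducible entries in column b of T is at most min(b, n-1-b); hence the total number of reducible entries of T is at most Σ_{b=1}^{n-2} min(b, n-1-b). -/

import Mathlib

open scoped Classical

/-- The cells of the Young diagram with row lengths `lam`: `(a,b)` with
`a,b ≥ 1` and `b ≤ lam a` (rows and columns are 1-indexed). -/
def CellOf (lam : ℕ → ℕ) (a b : ℕ) : Prop := 1 ≤ a ∧ 1 ≤ b ∧ b ≤ lam a

instance (lam : ℕ → ℕ) (a b : ℕ) : Decidable (CellOf lam a b) :=
  inferInstanceAs (Decidable (1 ≤ a ∧ 1 ≤ b ∧ b ≤ lam a))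

/-- Extension of a tableau by the boundary conventions `T_{a,0} = a`, `T_{0,b} = 0`. -/
def ExtT (T : ℕ → ℕ → ℕ) (a b : ℕ) : ℕ :=
  if b = 0 then a else if a = 0 then 0 else T a b

/-- `T` is a semistandard Young tableau of shape `lam` (1-indexed, with positive
entries, equal to `0` outside the shape): rows are weakly increasing and columns
strictly increasing, expressed with the conventions `T_{a,0} = a`, `T_{0,b} = 0`. -/
def IsSSYTShape (lam : ℕ → ℕ) (T : ℕ → ℕ → ℕ) : Prop :=
  (∀ a b, ¬ CellOf lam a b → T a b = 0) ∧
  (∀ a b, CellOf lam a b → ExtT T a (b - 1) ≤ ExtT T a b) ∧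
  (∀ a b, CellOf lam a b → ExtT T (a - 1) b < ExtT T a b)

/-- Row lengths of the staircase shape `δ_{n-1} = (n-2, n-3, …, 1)`:
row `a` has `n-1-a` cells. -/
def staircase (n : ℕ) : ℕ → ℕ := fun a => n - 1 - a

/-- Membership in `M_n`: SSYT of shape `δ_{n-1}` with all entries at most `n-1`. -/
def MnMem (n : ℕ) (T : ℕ → ℕ → ℕ) : Prop :=
  IsSSYTShape (staircase n) T ∧ ∀ a b, T a b ≤ n - 1

/-- The entry of `T` at `(a,b)` is reducible: `T_{a,b} - T_{a,b-1} ≥ 1` and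
`T_{a,b} - T_{a-1,b} ≥ 2`, with the conventions `T_{a,0} = a`, `T_{0,b} = 0`. -/
def Reducible (T : ℕ → ℕ → ℕ) (a b : ℕ) : Prop :=
  ExtT T a (b - 1) + 1 ≤ ExtT T a b ∧ ExtT T (a - 1) b + 2 ≤ ExtT T a b

/-- The minimal SSYT of shape `lam`, whose `(a,b)`-entry is `a`. -/
def minT (lam : ℕ → ℕ) : ℕ → ℕ → ℕ := fun a b => if CellOf lam a b then a else 0

/-- `AddT lam T a b k` adds `k` to every entry of `T` in a cell `(x,y)` of `lam`
with `x ≥ a` and `y ≥ b`. -/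
def AddT (lam : ℕ → ℕ) (T : ℕ → ℕ → ℕ) (a b k : ℕ) : ℕ → ℕ → ℕ :=
  fun x y => if CellOf lam x y ∧ a ≤ x ∧ b ≤ y then T x y + k else T x y

lemma extT_pos {T : ℕ → ℕ → ℕ} {a b : ℕ} (ha : 1 ≤ a) (hb : 1 ≤ b) :
    ExtT T a b = T a b := by
  unfold ExtT; rw [if_neg (by omega), if_neg (by omega)]

lemma extT_zero {T : ℕ → ℕ → ℕ} {b : ℕ} (hb : 1 ≤ b) : ExtT T 0 b = 0 := by
  unfold ExtT; rw [if_neg (by omega), if_pos rfl]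

lemma cell_iff {n a b : ℕ} (hb : 1 ≤ b) :
    CellOf (staircase n) a b ↔ 1 ≤ a ∧ a + b ≤ n - 1 := by
  unfold CellOf staircase
  omega

/-- Upper bound `T a b ≤ a + b`, auxiliary downward induction. -/
lemma upper_aux {n : ℕ} {T : ℕ → ℕ → ℕ} (hT : MnMem n T) (b : ℕ) :
    ∀ d a, CellOf (staircase n) a b → a + d + b = n - 1 → T a b ≤ a + b := by
  intro d
  induction d with
  | zero =>
    intro a hc he
    have := hT.2 a b
    omega
  | succ d ih =>
    intro a hc he
    obtain ⟨ha, hb, _⟩ := hc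
    have hc' : CellOf (staircase n) (a + 1) b := (cell_iff hb).2 ⟨by omega, by omega⟩
    have hlt := hT.1.2.2 (a + 1) b hc'
    simp only [Nat.add_sub_cancel] at hlt
    rw [extT_pos (Nat.le_add_left 1 a) hb, extT_pos ha hb] at hlt
    have := ih (a + 1) hc' (by omega)
    omega

lemma upper {n : ℕ} {T : ℕ → ℕ → ℕ} (hT : MnMem n T) {a b : ℕ}
    (hc : CellOf (staircase n) a b) : T a b ≤ a + b := by
  have hb := hc.2.1
  have h := (cell_iff hb).1 hc
  exact upper_aux hT b (n - 1 - a - b) a hc (by omega)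

/-- Lower bound: `a + (# reducible entries in column b among rows ≤ a) ≤ T a b`. -/
lemma lower {n : ℕ} {T : ℕ → ℕ → ℕ} (hT : MnMem n T) (b : ℕ) :
    ∀ a, CellOf (staircase n) a b →
      a + ((Finset.Icc 1 a).filter (fun x => Reducible T x b)).card ≤ T a b := by
  intro a
  induction a with
  | zero => intro hc; exact absurd hc.1 (by omega)
  | succ a ih =>
    intro hc
    have hb := hc.2.1
    have hlt := hT.1.2.2 (a + 1) b hc
    simp only [Nat.add_sub_cancel] at hlt
    rw [extT_pos (Nat.le_add_left 1 a) hb] at hlt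
    have hIcc : Finset.Icc 1 (a + 1) = insert (a + 1) (Finset.Icc 1 a) := by
      ext x; simp only [Finset.mem_Icc, Finset.mem_insert]; omega
    have hempty : (Finset.Icc 1 0 : Finset ℕ) = ∅ := rfl
    rw [hIcc, Finset.filter_insert]
    by_cases hr : Reducible T (a + 1) b
    · have h2 := hr.2
      simp only [Nat.add_sub_cancel] at h2
      rw [extT_pos (Nat.le_add_left 1 a) hb] at h2
      rw [if_pos hr, Finset.card_insert_of_notMem (by simp)]
      rcases Nat.eq_zero_or_pos a with h0 | hpos
      · subst h0
        rw [extT_zero hb] at h2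
        simp only [hempty, Finset.filter_empty, Finset.card_empty]
        omega
      · have hc' : CellOf (staircase n) a b := by
          have := (cell_iff hb).1 hc
          exact (cell_iff hb).2 ⟨hpos, by omega⟩
        have := ih hc'
        rw [extT_pos hpos hb] at h2
        omega
    · rw [if_neg hr]
      rcases Nat.eq_zero_or_pos a with h0 | hpos
      · subst h0
        rw [extT_zero hb] at hlt
        simp only [hempty, Finset.filter_empty, Finset.card_empty]
        omega
      · have hc' : CellOf (staircase n) a b := by
          have := (cell_iff hb).1 hc
          exact (cell_iff hb).2 ⟨hpos, by omega⟩
        have := ih hc'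
        rw [extT_pos hpos hb] at hlt
        omega

/-- The column count bound. -/
lemma col_count {n : ℕ} {T : ℕ → ℕ → ℕ} (hT : MnMem n T) {b : ℕ} (hb : 1 ≤ b) :
    ((Finset.Icc 1 (n - 1 - b)).filter (fun a => Reducible T a b)).card ≤
      min b (n - 1 - b) := by
  have h2 : ((Finset.Icc 1 (n - 1 - b)).filter (fun a => Reducible T a b)).card ≤ n - 1 - b := by
    calc ((Finset.Icc 1 (n - 1 - b)).filter (fun a => Reducible T a b)).card
        ≤ (Finset.Icc 1 (n - 1 - b)).card :=
          Finset.card_le_card (Finset.filter_subset _ _)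
      _ = n - 1 - b := by rw [Nat.card_Icc]; omega
  rcases ((Finset.Icc 1 (n - 1 - b)).filter (fun a => Reducible T a b)).eq_empty_or_nonempty
    with he | hne
  · simp [he]
  · obtain ⟨a, hamem, hmax⟩ : ∃ a ∈ (Finset.Icc 1 (n - 1 - b)).filter
        (fun a => Reducible T a b),
        ∀ x ∈ (Finset.Icc 1 (n - 1 - b)).filter (fun a => Reducible T a b), x ≤ a :=
      ⟨_, Finset.max'_mem _ hne, fun x hx => Finset.le_max' _ x hx⟩
    rw [Finset.mem_filter, Finset.mem_Icc] at hamem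
    obtain ⟨⟨ha1, ha2⟩, _⟩ := hamem
    have hc : CellOf (staircase n) a b := (cell_iff hb).2 ⟨ha1, by omega⟩
    have hl := lower hT b a hc
    have hu := upper hT hc
    have hsub : (Finset.Icc 1 (n - 1 - b)).filter (fun a => Reducible T a b) ⊆
        (Finset.Icc 1 a).filter (fun x => Reducible T x b) := by
      intro x hx
      have hle := hmax x hx
      rw [Finset.mem_filter, Finset.mem_Icc] at hx
      rw [Finset.mem_filter, Finset.mem_Icc]
      exact ⟨⟨hx.1.1, hle⟩, hx.2⟩
    have h1 := Finset.card_le_card hsub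
    omega

/-- For `T ∈ M_n` the number of reducible entries in column `b` is at most
`min(b, n-1-b)`, and hence the total number of reducible entries of `T` is at
most `Σ_{b=1}^{n-2} min(b, n-1-b)`. -/
theorem stmt15 (n : ℕ) (T : ℕ → ℕ → ℕ) (hT : MnMem n T) :
    (∀ b, 1 ≤ b → b ≤ n - 2 →
      {a : ℕ | CellOf (staircase n) a b ∧ Reducible T a b}.ncard ≤
        min b (n - 1 - b)) ∧
    {p : ℕ × ℕ | CellOf (staircase n) p.1 p.2 ∧ Reducible T p.1 p.2}.ncard ≤
      ∑ b ∈ Finset.Icc 1 (n - 2), min b (n - 1 - b) := by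
  constructor
  · intro b hb _
    have hset : {a : ℕ | CellOf (staircase n) a b ∧ Reducible T a b} =
        ↑((Finset.Icc 1 (n - 1 - b)).filter (fun a => Reducible T a b)) := by
      ext a
      simp only [Set.mem_setOf_eq, Finset.coe_filter, Finset.mem_Icc, cell_iff hb]
      constructor
      · rintro ⟨⟨h1, h2⟩, h3⟩; exact ⟨⟨h1, by omega⟩, h3⟩
      · rintro ⟨⟨h1, h2⟩, h3⟩; exact ⟨⟨h1, by omega⟩, h3⟩
    rw [hset, Set.ncard_coe_finset]
    exact col_count hT hb
  · set F := (Finset.Icc 1 (n - 2) ×ˢ Finset.Icc 1 (n - 2)).filter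
      (fun p : ℕ × ℕ => CellOf (staircase n) p.1 p.2 ∧ Reducible T p.1 p.2) with hF
    have hset : {p : ℕ × ℕ | CellOf (staircase n) p.1 p.2 ∧ Reducible T p.1 p.2} = ↑F := by
      ext p
      simp only [Set.mem_setOf_eq, hF, Finset.coe_filter, Finset.mem_product, Finset.mem_Icc]
      constructor
      · rintro ⟨hc, hr⟩
        obtain ⟨h1, h2, h3⟩ := hc
        unfold staircase at h3
        exact ⟨⟨⟨h1, by omega⟩, ⟨h2, by omega⟩⟩, ⟨h1, h2, h3⟩, hr⟩
      · rintro ⟨_, h⟩; exact h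
    rw [hset, Set.ncard_coe_finset]
    have hfib : F.card = ∑ b ∈ Finset.Icc 1 (n - 2),
        (F.filter (fun p => p.2 = b)).card := by
      apply Finset.card_eq_sum_card_fiberwise
      intro p hp
      rw [hF, Finset.mem_coe, Finset.mem_filter, Finset.mem_product] at hp
      exact hp.1.2
    rw [hfib]
    apply Finset.sum_le_sum
    intro b hbmem
    rw [Finset.mem_Icc] at hbmem
    have hb : 1 ≤ b := hbmem.1
    calc (F.filter (fun p => p.2 = b)).card
        ≤ ((Finset.Icc 1 (n - 1 - b)).filter (fun a => Reducible T a b)).card := by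
          apply Finset.card_le_card_of_injOn (fun p => p.1)
          · intro p hp
            rw [Finset.mem_coe, Finset.mem_filter, hF, Finset.mem_filter] at hp
            obtain ⟨⟨_, hc, hr⟩, hpb⟩ := hp
            rw [Finset.mem_coe, Finset.mem_filter, Finset.mem_Icc]
            beta_reduce
            rw [hpb] at hc hr
            have := (cell_iff hb).1 hc
            exact ⟨⟨this.1, by omega⟩, hr⟩
          · intro p hp q hq hpq
            rw [Finset.mem_coe, Finset.mem_filter] at hp hq
            have hpq' : p.1 = q.1 := hpq
            rw [Prod.ext_iff]
            exact ⟨hpq', hp.2.trans hq.2.symm⟩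
      _ ≤ min b (n - 1 - b) := col_count hT hb
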